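/- Let A and B be bounded self-adjoint operators on a complex Hilbert space H, and let R be a bounded operator on H commuting with A: R A = A R. Then for every t ∈ ℝ, ‖R (exp(i t A) − exp(i t B))‖ ≤ |t| · ‖R (A − B)‖. -/

import Mathlib

open NormedSpace

section Aux

variable {H : Type*} [NormedAddCommGroup H] [InnerProductSpace ℂ H] [CompleteSpace H]

noncomputable instance instNormedAlgebraRatCLM : NormedAlgebra ℚ (H →L[ℂ] H) :=
  NormedAlgebra.restrictScalars ℚ ℂ _

/-- The exponential of a skew-adjoint operator is unitary, hence has norm one. -/
lemma norm_exp_skew [Nontrivial H] (S : H →L[ℂ] H) (hS : star S = -S) :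
    ‖exp S‖ = 1 := by
  have hc : Commute (-S) S := (Commute.refl S).neg_left
  have h1 : exp (-S) * exp S = 1 := by
    rw [← exp_add_of_commute hc, neg_add_cancel, exp_zero]
  have h2 : exp S * exp (-S) = 1 := by
    rw [← exp_add_of_commute hc.symm, add_neg_cancel, exp_zero]
  have hstar : star (exp S) = exp (-S) := by rw [← hS, star_exp]
  have hmem : exp S ∈ unitary (H →L[ℂ] H) := by
    constructor
    · rw [hstar]; exact h1
    · rw [hstar]; exact h2
  exact CStarRing.norm_of_mem_unitary hmem

lemma skew_of_selfAdjoint (A : H →L[ℂ] H) (hA : IsSelfAdjoint A) (s : ℝ) :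
    star ((s : ℂ) • Complex.I • A) = -((s : ℂ) • Complex.I • A) := by
  rw [star_smul, star_smul, hA.star_eq, Complex.star_def, Complex.conj_ofReal,
    Complex.conj_I, neg_smul, smul_neg]

/-- `comp_ofReal` for functions into any complex normed space. -/
lemma HasDerivAt.comp_ofReal'' {M : Type*} [NormedAddCommGroup M] [NormedSpace ℂ M]
    {g : ℂ → M} {g' : M} {s : ℝ} (h : HasDerivAt g g' (s : ℂ)) :
    HasDerivAt (fun y : ℝ => g (y : ℂ)) g' s := by
  simpa [Function.comp_def] using
    ((h.hasFDerivAt.restrictScalars ℝ).comp s Complex.ofRealCLM.hasFDerivAt).hasDerivAt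

end Aux

set_option maxHeartbeats 1000000 in
/-- For bounded self-adjoint `A`, `B` and a bounded `R`
commuting with `A`, `‖R (exp(i t A) − exp(i t B))‖ ≤ |t| ‖R (A − B)‖`. -/
theorem stmt_15 {H : Type*} [NormedAddCommGroup H] [InnerProductSpace ℂ H] [CompleteSpace H]
    (A B : H →L[ℂ] H) (hA : IsSelfAdjoint A) (hB : IsSelfAdjoint B)
    (R : H →L[ℂ] H) (hRA : R * A = A * R) (t : ℝ) :
    ‖R * (exp ((Complex.I * t) • A) - exp ((Complex.I * t) • B))‖ ≤
      |t| * ‖R * (A - B)‖ := by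
  rcases subsingleton_or_nontrivial H with hH | hH
  · have : Subsingleton (H →L[ℂ] H) := ⟨fun f g => ContinuousLinearMap.ext fun x =>
      Subsingleton.elim _ _⟩
    have h0 : R * (exp ((Complex.I * t) • A) - exp ((Complex.I * t) • B)) = 0 :=
      Subsingleton.elim _ _
    rw [h0, norm_zero]
    positivity
  -- notation
  set X : H →L[ℂ] H := Complex.I • A with hX
  set Y : H →L[ℂ] H := Complex.I • B with hY
  have hIt : ∀ M : H →L[ℂ] H, (Complex.I * (t : ℂ)) • M = (t : ℂ) • Complex.I • M := by
    intro M; rw [smul_smul, mul_comm]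
  -- the interpolation function
  set G : ℝ → (H →L[ℂ] H) :=
    fun s => exp ((s : ℂ) • (-X)) * (R * exp ((s : ℂ) • Y)) with hG
  -- derivative of G
  have hGderiv : ∀ s : ℝ, HasDerivAt G
      (exp ((s : ℂ) • (-X)) * (R * Y - X * R) * exp ((s : ℂ) • Y)) s := by
    intro s
    have h1 : HasDerivAt (fun u : ℝ => exp ((u : ℂ) • (-X)))
        (exp ((s : ℂ) • (-X)) * (-X)) s :=
      HasDerivAt.comp_ofReal'' (g := fun z : ℂ => exp (z • (-X)))
        (hasDerivAt_exp_smul_const (-X) (s : ℂ))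
    have h2 : HasDerivAt (fun u : ℝ => R * exp ((u : ℂ) • Y))
        (R * (Y * exp ((s : ℂ) • Y))) s :=
      (HasDerivAt.comp_ofReal'' (g := fun z : ℂ => exp (z • Y))
        (hasDerivAt_exp_smul_const' Y (s : ℂ))).const_mul R
    have := h1.mul h2
    refine this.congr_deriv ?_
    noncomm_ring
  -- bound on the derivative
  have hRABnorm : ∀ s : ℝ,
      ‖exp ((s : ℂ) • (-X)) * (R * Y - X * R) * exp ((s : ℂ) • Y)‖ ≤ ‖R * (A - B)‖ := by
    intro s
    have hnX : ‖exp ((s : ℂ) • (-X))‖ = 1 := by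
      have : (s : ℂ) • (-X) = ((-s : ℝ) : ℂ) • Complex.I • A := by
        push_cast; rw [hX]; module
      rw [this]
      exact norm_exp_skew _ (skew_of_selfAdjoint A hA (-s))
    have hnY : ‖exp ((s : ℂ) • Y)‖ = 1 := by
      rw [hY]
      exact norm_exp_skew _ (skew_of_selfAdjoint B hB s)
    have hmid : R * Y - X * R = Complex.I • (R * (B - A)) := by
      rw [hX, hY, mul_smul_comm, smul_mul_assoc, ← smul_sub, mul_sub, ← hRA]
    have hmidnorm : ‖R * Y - X * R‖ = ‖R * (A - B)‖ := by
      rw [hmid, norm_smul, Complex.norm_I, one_mul]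
      have : R * (B - A) = -(R * (A - B)) := by noncomm_ring
      rw [this, norm_neg]
    calc ‖exp ((s : ℂ) • (-X)) * (R * Y - X * R) * exp ((s : ℂ) • Y)‖
        ≤ ‖exp ((s : ℂ) • (-X)) * (R * Y - X * R)‖ * ‖exp ((s : ℂ) • Y)‖ :=
          norm_mul_le _ _
      _ ≤ ‖exp ((s : ℂ) • (-X))‖ * ‖R * Y - X * R‖ * ‖exp ((s : ℂ) • Y)‖ := by
          gcongr; exact norm_mul_le _ _
      _ = ‖R * (A - B)‖ := by rw [hnX, hnY, hmidnorm, one_mul, mul_one]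
  -- mean value inequality
  have hmv : ‖G t - G 0‖ ≤ ‖R * (A - B)‖ * ‖t - (0 : ℝ)‖ := by
    refine Convex.norm_image_sub_le_of_norm_hasDerivWithin_le
      (f := G) (f' := fun s => exp ((s : ℂ) • (-X)) * (R * Y - X * R) * exp ((s : ℂ) • Y))
      (s := Set.univ) (fun x _ => (hGderiv x).hasDerivWithinAt)
      (fun x _ => hRABnorm x) convex_univ trivial trivial
  -- algebraic identity
  have hexpinv : exp ((t : ℂ) • X) * exp ((t : ℂ) • (-X)) = 1 := by
    rw [smul_neg, ← exp_add_of_commute ((Commute.refl ((t : ℂ) • X)).neg_right),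
      add_neg_cancel, exp_zero]
  have hRcommX : R * exp ((t : ℂ) • X) = exp ((t : ℂ) • X) * R := by
    have : Commute R ((t : ℂ) • X) := by
      have h0 : Commute R A := hRA
      rw [hX]
      exact (h0.smul_right Complex.I).smul_right ((t : ℂ))
    exact (this.exp_right)
  have hkey : R * (exp ((Complex.I * t) • A) - exp ((Complex.I * t) • B))
      = exp ((t : ℂ) • X) * (G 0 - G t) := by
    rw [hIt A, hIt B, ← hX, ← hY, hG]
    simp only [Complex.ofReal_zero, zero_smul, exp_zero, one_mul, mul_one]
    rw [mul_sub, mul_sub, ← mul_assoc, ← mul_assoc, hexpinv, one_mul, hRcommX]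
  rw [hkey]
  calc ‖exp ((t : ℂ) • X) * (G 0 - G t)‖
      ≤ ‖exp ((t : ℂ) • X)‖ * ‖G 0 - G t‖ := norm_mul_le _ _
    _ ≤ 1 * ‖G t - G 0‖ := by
        rw [norm_sub_rev]
        gcongr
        have : (t : ℂ) • X = ((t : ℝ) : ℂ) • Complex.I • A := by rw [hX]
        rw [this]
        exact le_of_eq (norm_exp_skew _ (skew_of_selfAdjoint A hA t))
    _ ≤ 1 * (‖R * (A - B)‖ * ‖t - (0 : ℝ)‖) := by gcongr
    _ = |t| * ‖R * (A - B)‖ := by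
        rw [one_mul, sub_zero, Real.norm_eq_abs, mul_comm]
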